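/- Let a,b be integers with a+b ≥ 2 and b > 0, and let Row be rowmotion on the ν-Dyck lattice with ν = EᵃNE^bN given by: Row(x,y) = (a+b,a) if x=y=0; (y+b-1, y-1) if x=0, y>0; (x-1,a) if (y=0, x>0) or x=y+b; (x-1,y-1) otherwise. Then for a+1 ≤ x ≤ a+b-1, Row^{a+1}(x,a) = (x-(a+1), a); and Row^{a+2}(a,a) = (a+b-1, a). -/

import Mathlib

/-- For rowmotion on the ν-Dyck lattice with ν = EᵃNE^bN (`b > 0`):
`Row^{a+1}(x,a) = (x-(a+1), a)` for `a+1 ≤ x ≤ a+b-1`, and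
`Row^{a+2}(a,a) = (a+b-1, a)`. -/
theorem stmt_14 (a b : ℕ) (hab : 2 ≤ a + b) (hb : 0 < b) :
    let Row : ℤ × ℤ → ℤ × ℤ := fun p =>
      if p.1 = 0 ∧ p.2 = 0 then ((a : ℤ) + b, (a : ℤ))
      else if p.1 = 0 then (p.2 + b - 1, p.2 - 1)
      else if p.2 = 0 ∨ p.1 = p.2 + b then (p.1 - 1, (a : ℤ))
      else (p.1 - 1, p.2 - 1)
    (∀ x : ℕ, a + 1 ≤ x → x ≤ a + b - 1 →
      Row^[a + 1] ((x : ℤ), (a : ℤ)) = ((x : ℤ) - ((a : ℤ) + 1), (a : ℤ))) ∧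
    Row^[a + 2] ((a : ℤ), (a : ℤ)) = ((a : ℤ) + b - 1, (a : ℤ)) := by
  intro Row
  have hbZ : (0 : ℤ) < b := by exact_mod_cast hb
  -- descent lemma
  have key : ∀ x : ℤ, (a : ℤ) ≤ x → x < (a : ℤ) + b →
      ∀ j : ℕ, j ≤ a → Row^[j] (x, (a : ℤ)) = (x - j, (a : ℤ) - j) := by
    intro x hx hx' j
    induction j with
    | zero => intro _; simp
    | succ j ih =>
      intro hj
      have hj' : j ≤ a := Nat.le_of_succ_le hj
      have hjlt : (j : ℤ) < a := by exact_mod_cast hj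
      rw [Function.iterate_succ_apply', ih hj']
      have h1 : x - (j : ℤ) ≠ 0 := by omega
      have h2 : (a : ℤ) - (j : ℤ) ≠ 0 := by omega
      have h3 : x - (j : ℤ) ≠ ((a : ℤ) - j) + b := by omega
      show (if _ then _ else _) = _
      simp only [Row]
      rw [if_neg (by simp [h1]), if_neg h1, if_neg (by push_neg; exact ⟨h2, h3⟩)]
      simp only [Prod.mk.injEq]
      constructor <;> push_cast <;> ring
  constructor
  · intro x hx1 hx2
    have hxa : (a : ℤ) ≤ (x : ℤ) := by exact_mod_cast Nat.le_of_succ_le hx1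
    have hxa' : (a : ℤ) < (x : ℤ) := by exact_mod_cast hx1
    have hxb : (x : ℤ) < (a : ℤ) + b := by
      have : x < a + b := by omega
      exact_mod_cast this
    rw [Function.iterate_succ_apply', key (x : ℤ) hxa hxb a le_rfl]
    have h1 : (x : ℤ) - a ≠ 0 := by omega
    simp only [Row]
    rw [if_neg (by simp [h1]), if_neg h1, if_pos (Or.inl (by ring))]
    simp only [Prod.mk.injEq]
    constructor
    · ring
    · trivial
  · have h0 : Row^[a] ((a : ℤ), (a : ℤ)) = (0, 0) := by
      rw [key (a : ℤ) le_rfl (by omega) a le_rfl]; simp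
    have : a + 2 = (a + 1) + 1 := by ring
    rw [this, Function.iterate_succ_apply', Function.iterate_succ_apply', h0]
    have h1 : Row (0, 0) = ((a : ℤ) + b, (a : ℤ)) := by
      simp [Row]
    rw [h1]
    have habZ : (0 : ℤ) < (a : ℤ) + b := by positivity
    simp only [Row]
    rw [if_neg (by simp; omega), if_neg (by omega), if_pos (by simp)]
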